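/- Let n = 2m+1 be odd with m ≥ 2, k a field of characteristic 2, and L = N_1(n,k). Then the derived subalgebra [L,L] is spanned by {e_α : α ≠ α̂}, where α̂ = α_1 + ⋯ + α_n is the all-ones vector; in particular [L,L] has dimension 2^n − 2 and L is not perfect. -/

import Mathlib

/-- Parity `|α|` of the coordinate sum of `α ∈ GF(2)^n`. -/
def par {n : ℕ} (α : Fin n → ZMod 2) : ZMod 2 := ∑ i, α i

/-- Standard inner product `(α, β)` on `GF(2)^n`. -/
def dotp {n : ℕ} (α β : Fin n → ZMod 2) : ZMod 2 := ∑ i, α i * β i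

/-- Structure constant of `N₁(n,k)` on `e_{α+β}`: equal to `1` if `|α| = |β| = 1`,
and to `(α,β)` if `|α| = 0` or `|β| = 0`. -/
noncomputable def cN1 (k : Type*) [Field k] {n : ℕ} (α β : Fin n → ZMod 2) : k :=
  if par α = 1 ∧ par β = 1 then 1 else if dotp α β = 1 then 1 else 0

/-- The bracket of `N₁(n,k)`, defined on the free `k`-module with basis
`{e_α : α ∈ GF(2)^n \ {0}}` (realized as finitely supported functions), extended
bilinearly from `⁅e_α, e_β⁆ = cN1 α β • e_{α+β}` (and `0` when `α + β = 0`). -/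
noncomputable def brN1 {k : Type*} [Field k] {n : ℕ}
    (f g : {v : Fin n → ZMod 2 // v ≠ 0} →₀ k) :
    {v : Fin n → ZMod 2 // v ≠ 0} →₀ k :=
  f.sum fun α a => g.sum fun β b =>
    if h : α.1 + β.1 ≠ 0 then
      Finsupp.single ⟨α.1 + β.1, h⟩ (a * b * cN1 k α.1 β.1)
    else 0

/-- The basis vector `e_α` of `N₁(n,k)`. -/
noncomputable def eN1 (k : Type*) [Field k] {n : ℕ} (α : Fin n → ZMod 2) (h : α ≠ 0) :
    {v : Fin n → ZMod 2 // v ≠ 0} →₀ k :=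
  Finsupp.single ⟨α, h⟩ 1

lemma brN1_single {k : Type*} [Field k] {n : ℕ} (α β : Fin n → ZMod 2)
    (hα : α ≠ 0) (hβ : β ≠ 0) (h : α + β ≠ 0) :
    brN1 (eN1 k α hα) (eN1 k β hβ) = Finsupp.single ⟨α + β, h⟩ (cN1 k α β) := by
  unfold brN1 eN1
  rw [Finsupp.sum_single_index, Finsupp.sum_single_index]
  · simp [dif_pos h]
  · split <;> simp
  · rw [Finsupp.sum_single_index] <;> split <;> simp

lemma zmod2_ne_one {x : ZMod 2} (h : x ≠ 1) : x = 0 := by revert h; revert x; decide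

lemma dotp_add_left {n : ℕ} (a b c : Fin n → ZMod 2) :
    dotp (a + b) c = dotp a c + dotp b c := by
  simp [dotp, add_mul, Finset.sum_add_distrib]

lemma par_add {n : ℕ} (α β : Fin n → ZMod 2) : par (α + β) = par α + par β := by
  simp [par, Finset.sum_add_distrib]

lemma par_single {n : ℕ} (i : Fin n) : par (Pi.single i (1 : ZMod 2)) = 1 := by
  simp [par, Pi.single_apply]

lemma dotp_single_left {n : ℕ} (i : Fin n) (β : Fin n → ZMod 2) :
    dotp (Pi.single i 1) β = β i := by
  simp [dotp, Pi.single_apply, ite_mul]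

lemma eN1_eq_br {k : Type*} [Field k] {n : ℕ} {α β γ : Fin n → ZMod 2}
    (hα : α ≠ 0) (hβ : β ≠ 0) (hγ : γ ≠ 0) (hsum : α + β = γ)
    (hc : cN1 k α β = 1) : eN1 k γ hγ = brN1 (eN1 k α hα) (eN1 k β hβ) := by
  subst hsum
  rw [brN1_single α β hα hβ hγ, hc]
  rfl

lemma eN1_is_bracket {k : Type*} [Field k] {n : ℕ} (γ : Fin n → ZMod 2)
    (hγ : γ ≠ 0) (hhat : γ ≠ fun _ => 1) :
    ∃ x y : {v : Fin n → ZMod 2 // v ≠ 0} →₀ k, eN1 k γ hγ = brN1 x y := by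
  obtain ⟨i, hi⟩ : ∃ i, γ i = 1 := by
    by_contra hcon; push_neg at hcon
    exact hγ (funext fun t => zmod2_ne_one (hcon t))
  have hxy : ∀ x y : ZMod 2, x + (y + x) = y := by decide
  by_cases hp : par γ = 1
  · obtain ⟨j, hj⟩ : ∃ j, γ j = 0 := by
      by_contra hcon; push_neg at hcon
      exact hhat (funext fun t => by
        have := zmod2_ne_one (x := γ t + 1) ?_
        · have key : ∀ x : ZMod 2, x + 1 = 0 → x = 1 := by decide
          exact key _ this
        · intro hc
          have key : ∀ x : ZMod 2, x + 1 = 1 → x = 0 := by decide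
          exact hcon t (key _ hc))
    have hij : i ≠ j := fun h => by rw [h, hj] at hi; exact one_ne_zero hi.symm
    set α : Fin n → ZMod 2 := Pi.single i 1 + Pi.single j 1 with hαdef
    have hαi : α i = 1 := by
      simp [hαdef, Pi.single_eq_same, Pi.single_eq_of_ne hij]
    have hαj : α j = 1 := by
      simp [hαdef, Pi.single_eq_same, Pi.single_eq_of_ne hij.symm]
    set β : Fin n → ZMod 2 := γ + α with hβdef
    have hα : α ≠ 0 := fun h => by rw [h] at hαi; exact one_ne_zero hαi.symm
    have hβ : β ≠ 0 := by
      intro h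
      have : β j = 0 := by rw [h]; rfl
      rw [hβdef] at this
      simp only [Pi.add_apply, hj, hαj, zero_add] at this
      exact one_ne_zero this
    have hsum : α + β = γ := funext fun t => hxy (α t) (γ t)
    refine ⟨eN1 k α hα, eN1 k β hβ, eN1_eq_br hα hβ hγ hsum ?_⟩
    have hparα : par α = 0 := by
      rw [hαdef, par_add, par_single, par_single]; decide
    have hdot : dotp α β = 1 := by
      rw [hαdef, dotp_add_left, dotp_single_left, dotp_single_left, hβdef]
      simp only [Pi.add_apply, hi, hj, hαi, hαj, zero_add]
      decide
    unfold cN1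
    rw [if_neg, if_pos hdot]
    rintro ⟨h1, _⟩; rw [hparα] at h1; exact one_ne_zero h1.symm
  · set α : Fin n → ZMod 2 := Pi.single i 1 with hαdef
    set β : Fin n → ZMod 2 := γ + α with hβdef
    have hα : α ≠ 0 := fun h => by
      have : α i = 0 := by rw [h]; rfl
      rw [hαdef, Pi.single_eq_same] at this; exact one_ne_zero this
    have hparβ : par β = 1 := by
      rw [hβdef, par_add, hαdef, par_single, zmod2_ne_one hp, zero_add]
    have hβ : β ≠ 0 := fun h => by
      rw [h] at hparβ
      have : par (0 : Fin n → ZMod 2) = 0 := by simp [par]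
      rw [this] at hparβ; exact one_ne_zero hparβ.symm
    have hsum : α + β = γ := funext fun t => hxy (α t) (γ t)
    refine ⟨eN1 k α hα, eN1 k β hβ, eN1_eq_br hα hβ hγ hsum ?_⟩
    unfold cN1
    rw [if_pos ⟨by rw [hαdef, par_single], hparβ⟩]

lemma par_ones {n : ℕ} : par (fun _ : Fin n => (1 : ZMod 2)) = (n : ZMod 2) := by
  simp [par]

lemma zmod2_mul_one_add (x : ZMod 2) : x * (1 + x) = 0 := by revert x; decide

lemma cN1_hat {k : Type*} [Field k] {n : ℕ} (hodd : (n : ZMod 2) = 1)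
    (α β : Fin n → ZMod 2) (h : α + β = fun _ => 1) : cN1 k α β = 0 := by
  have hpar : par α + par β = 1 := by rw [← par_add, h, par_ones, hodd]
  have hβ : β = fun i => 1 + α i := by
    funext i
    have h1 := congrFun h i
    simp only [Pi.add_apply] at h1
    have key : ∀ x y : ZMod 2, x + y = 1 → y = 1 + x := by decide
    exact key _ _ h1
  have hdot : dotp α β = 0 := by
    rw [hβ]; unfold dotp; simp [zmod2_mul_one_add]
  unfold cN1
  rw [if_neg, if_neg]
  · simp [hdot]
  · rintro ⟨h1, h2⟩
    rw [h1, h2] at hpar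
    simp at hpar

lemma brN1_mem_span {k : Type*} [Field k] {n : ℕ} (hodd : (n : ZMod 2) = 1)
    (x y : {v : Fin n → ZMod 2 // v ≠ 0} →₀ k) :
    brN1 x y ∈ Submodule.span k {z : {v : Fin n → ZMod 2 // v ≠ 0} →₀ k |
        ∃ (α : Fin n → ZMod 2) (hα : α ≠ 0), α ≠ (fun _ => 1) ∧ z = eN1 k α hα} := by
  unfold brN1
  apply Submodule.finsuppSum_mem
  intro α _
  apply Submodule.finsuppSum_mem
  intro β _
  split
  case isTrue h =>
    by_cases hhat : α.1 + β.1 = fun _ => 1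
    · rw [cN1_hat hodd _ _ hhat]
      simp
    · have : Finsupp.single (⟨α.1 + β.1, h⟩ : {v : Fin n → ZMod 2 // v ≠ 0})
          (x α * y β * cN1 k α.1 β.1) =
          (x α * y β * cN1 k α.1 β.1) • eN1 k (α.1 + β.1) h := by
        rw [eN1, Finsupp.smul_single, smul_eq_mul, mul_one]
      rw [this]
      exact Submodule.smul_mem _ _ (Submodule.subset_span ⟨_, h, hhat, rfl⟩)
  case isFalse => exact Submodule.zero_mem _

lemma card_ne_aux {A : Type*} [Fintype A] [DecidableEq A] (a : A) :
    Fintype.card {x : A // x ≠ a} = Fintype.card A - 1 := by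
  have := Fintype.card_subtype_compl (fun x : A => x = a)
  rw [Fintype.card_subtype_eq] at this
  exact this

/-- For `n = 2m + 1` odd with `m ≥ 2`, the derived subalgebra
`[L, L]` of `L = N₁(n,k)` is spanned by `{e_α : α ≠ α̂}` where `α̂` is the all-ones
vector; in particular it has dimension `2^n - 2` and `L` is not perfect. -/
theorem N1_derived_odd {m n : ℕ} (hm : 2 ≤ m) (hn : n = 2 * m + 1)
    {k : Type*} [Field k] (hchar : CharP k 2) :
    Submodule.span k {z : {v : Fin n → ZMod 2 // v ≠ 0} →₀ k |
        ∃ x y : {v : Fin n → ZMod 2 // v ≠ 0} →₀ k, z = brN1 x y} =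
      Submodule.span k {z : {v : Fin n → ZMod 2 // v ≠ 0} →₀ k |
        ∃ (α : Fin n → ZMod 2) (hα : α ≠ 0), α ≠ (fun _ => 1) ∧ z = eN1 k α hα} ∧
    Module.finrank k
      ↥(Submodule.span k {z : {v : Fin n → ZMod 2 // v ≠ 0} →₀ k |
          ∃ x y : {v : Fin n → ZMod 2 // v ≠ 0} →₀ k, z = brN1 x y}) = 2 ^ n - 2 ∧
    Submodule.span k {z : {v : Fin n → ZMod 2 // v ≠ 0} →₀ k |
        ∃ x y : {v : Fin n → ZMod 2 // v ≠ 0} →₀ k, z = brN1 x y} ≠ ⊤ := by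
  classical
  have hn0 : 0 < n := by omega
  have hodd : (n : ZMod 2) = 1 := by
    rw [hn]; push_cast
    rw [(by decide : (2 : ZMod 2) = 0)]; ring
  have hhat : (fun _ : Fin n => (1 : ZMod 2)) ≠ 0 := by
    intro h
    have := congrFun h ⟨0, hn0⟩
    simp at this
  -- span equality
  have hspan : Submodule.span k {z : {v : Fin n → ZMod 2 // v ≠ 0} →₀ k |
        ∃ x y : {v : Fin n → ZMod 2 // v ≠ 0} →₀ k, z = brN1 x y} =
      Submodule.span k {z : {v : Fin n → ZMod 2 // v ≠ 0} →₀ k |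
        ∃ (α : Fin n → ZMod 2) (hα : α ≠ 0), α ≠ (fun _ => 1) ∧ z = eN1 k α hα} := by
    apply le_antisymm
    · rw [Submodule.span_le]
      rintro z ⟨x, y, rfl⟩
      exact brN1_mem_span hodd x y
    · rw [Submodule.span_le]
      rintro z ⟨α, hα, hne, rfl⟩
      exact Submodule.subset_span (eN1_is_bracket α hα hne)
  refine ⟨hspan, ?_, ?_⟩
  · -- finrank
    rw [hspan]
    have hset : {z : {v : Fin n → ZMod 2 // v ≠ 0} →₀ k |
        ∃ (α : Fin n → ZMod 2) (hα : α ≠ 0), α ≠ (fun _ => 1) ∧ z = eN1 k α hα} =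
        Set.range (fun p : {p : {v : Fin n → ZMod 2 // v ≠ 0} // p.1 ≠ fun _ => 1} =>
          Finsupp.single (p.1 : {v : Fin n → ZMod 2 // v ≠ 0}) (1 : k)) := by
      ext z
      constructor
      · rintro ⟨α, hα, hne, rfl⟩
        exact ⟨⟨⟨α, hα⟩, hne⟩, rfl⟩
      · rintro ⟨⟨⟨α, hα⟩, hne⟩, rfl⟩
        exact ⟨α, hα, hne, rfl⟩
    rw [hset]
    have hli : LinearIndependent k
        (fun p : {p : {v : Fin n → ZMod 2 // v ≠ 0} // p.1 ≠ fun _ => 1} =>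
          Finsupp.single (p.1 : {v : Fin n → ZMod 2 // v ≠ 0}) (1 : k)) := by
      have h1 := (Finsupp.basisSingleOne
        (R := k) (ι := {v : Fin n → ZMod 2 // v ≠ 0})).linearIndependent
      rw [Finsupp.coe_basisSingleOne] at h1
      exact h1.comp Subtype.val Subtype.val_injective
    rw [finrank_span_eq_card hli]
    have e1 : {p : {v : Fin n → ZMod 2 // v ≠ 0} // p.1 ≠ fun _ => 1} ≃
        {p : {v : Fin n → ZMod 2 // v ≠ 0} // p ≠ ⟨fun _ => 1, hhat⟩} :=
      Equiv.subtypeEquivRight fun p =>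
        not_congr ⟨fun h => Subtype.ext h, fun h => congrArg Subtype.val h⟩
    rw [Fintype.card_congr e1, card_ne_aux, card_ne_aux, Fintype.card_fun,
      ZMod.card, Fintype.card_fin]
    omega
  · -- not top
    intro htop
    have hmem : eN1 k (fun _ => 1) hhat ∈
        Submodule.span k {z : {v : Fin n → ZMod 2 // v ≠ 0} →₀ k |
          ∃ x y : {v : Fin n → ZMod 2 // v ≠ 0} →₀ k, z = brN1 x y} := by
      rw [htop]; trivial
    rw [hspan] at hmem
    have hker : Submodule.span k {z : {v : Fin n → ZMod 2 // v ≠ 0} →₀ k |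
        ∃ (α : Fin n → ZMod 2) (hα : α ≠ 0), α ≠ (fun _ => 1) ∧ z = eN1 k α hα} ≤
        LinearMap.ker (Finsupp.lapply
          (⟨fun _ => 1, hhat⟩ : {v : Fin n → ZMod 2 // v ≠ 0}) :
          ({v : Fin n → ZMod 2 // v ≠ 0} →₀ k) →ₗ[k] k) := by
      rw [Submodule.span_le]
      rintro z ⟨α, hα, hne, rfl⟩
      simp only [SetLike.mem_coe, LinearMap.mem_ker, Finsupp.lapply_apply, eN1]
      exact Finsupp.single_eq_of_ne' (fun h => hne (congrArg Subtype.val h))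
    have := hker hmem
    simp only [LinearMap.mem_ker, Finsupp.lapply_apply, eN1,
      Finsupp.single_eq_same] at this
    exact one_ne_zero this
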